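/- Let (Ω,ℱ,ℙ) be a probability space, P ≪ ℙ a probability measure and Q ≪ P a probability measure with generalized entropy V(Q|P) = E_P[V(dQ/dP)] < ∞, where U satisfies the Inada conditions and the reasonable asymptotic elasticity condition. Let (k^n)_{n∈ℕ} be a sequence of real-valued random variables such that each k^n ∈ L¹(Q) with E_Q[k^n] ≤ 0, each U(k^n)⁻ ∈ L¹(P), and inf_n E_P[U(k^n)] > −∞. Then (a) the sequence (k^n) is bounded in L¹(Q), i.e. sup_n E_Q[|k^n|] < ∞, and (b) the sequence (U(k^n)) is bounded in L¹(P), i.e. sup_n E_P[|U(k^n)|] < ∞. -/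

import Mathlib

open MeasureTheory Filter Set

private lemma ofReal_max_zero (a : ℝ) :
    ENNReal.ofReal a = ENNReal.ofReal (max a 0) := by
  rcases le_total a 0 with h | h
  · simp [ENNReal.ofReal_of_nonpos h, max_eq_right h]
  · simp [max_eq_left h]

set_option maxHeartbeats 1000000 in
/-- Lemma (Biagini–Černý type, parts (a) and (b)): under the Inada conditions and
reasonable asymptotic elasticity, a sequence `kⁿ` with `E_Q[kⁿ] ≤ 0` and
`E_P[U(kⁿ)]` bounded below is bounded in `L¹(Q)`, and `(U(kⁿ))` is bounded in `L¹(P)`. -/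
theorem stmt_0 {Ω : Type*} [MeasurableSpace Ω]
    (μ P Q : Measure Ω) [IsProbabilityMeasure μ] [IsProbabilityMeasure P]
    [IsProbabilityMeasure Q]
    (hPμ : P ≪ μ) (hQP : Q ≪ P)
    (U V : ℝ → ℝ)
    (hUdiff : Differentiable ℝ U)
    (hUconc : StrictConcaveOn ℝ Set.univ U)
    (hInada1 : Tendsto (deriv U) atBot atTop)
    (hInada2 : Tendsto (deriv U) atTop (nhds 0))
    (hRAE1 : 1 < liminf (fun x => ((x * deriv U x / U x : ℝ) : EReal)) atBot)
    (hRAE2 : limsup (fun x => ((x * deriv U x / U x : ℝ) : EReal)) atTop < 1)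
    (hV : ∀ y : ℝ, 0 < y → V y = ⨆ x : ℝ, (U x - x * y))
    (hV0 : BddAbove (Set.range U) → V 0 = sSup (Set.range U))
    (hpos : ¬ BddAbove (Set.range U) → ∀ᵐ ω ∂P, 0 < Q.rnDeriv P ω)
    (hent : Integrable (fun ω => V ((Q.rnDeriv P ω).toReal)) P)
    (k : ℕ → Ω → ℝ) (hkmeas : ∀ n, Measurable (k n))
    (hkQ : ∀ n, Integrable (k n) Q)
    (hkmean : ∀ n, ∫ ω, k n ω ∂Q ≤ 0)
    (hUneg : ∀ n, Integrable (fun ω => max (-(U (k n ω))) 0) P)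
    (hlb : ∃ c : ℝ, ∀ n,
      ∫⁻ ω, ENNReal.ofReal (-(U (k n ω))) ∂P
        ≤ ∫⁻ ω, ENNReal.ofReal (U (k n ω)) ∂P + ENNReal.ofReal c) :
    (∃ C : ℝ, ∀ n, ∫ ω, |k n ω| ∂Q ≤ C) ∧
    (∀ n, Integrable (fun ω => U (k n ω)) P) ∧
    (∃ C : ℝ, ∀ n, ∫ ω, |U (k n ω)| ∂P ≤ C) := by
  classical
  obtain ⟨c, hc⟩ := hlb
  have hUcont : Continuous U := hUdiff.continuous
  -- derivative is antitone and strictly positive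
  have hanti : Antitone (deriv U) := by
    intro a b hab
    exact hUconc.concaveOn.antitoneOn_deriv (fun x _ => hUdiff x)
      (mem_univ a) (mem_univ b) hab
  have hderiv_pos : ∀ x, 0 < deriv U x := by
    intro x
    have h1 : 0 ≤ deriv U (x + 1) :=
      le_of_tendsto hInada2 (Filter.eventually_atTop.2 ⟨x + 1, fun y hy => hanti hy⟩)
    have h2 : deriv U (x + 1) < deriv U x :=
      hUconc.strictAntiOn_deriv (fun x _ => hUdiff x) (mem_univ x) (mem_univ (x + 1))
        (by linarith)
    linarith
  have hUmono : StrictMono U := strictMono_of_deriv_pos hderiv_pos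
  -- tangent line inequality
  have tangent : ∀ a x : ℝ, U x ≤ U a + deriv U a * (x - a) := by
    intro a x
    rcases lt_trichotomy x a with h | h | h
    · obtain ⟨cc, hcc, hceq⟩ := exists_deriv_eq_slope U h hUcont.continuousOn
        hUdiff.differentiableOn
      have hax : (0:ℝ) < a - x := by linarith
      rw [eq_div_iff hax.ne'] at hceq
      have h1 : deriv U a ≤ deriv U cc := hanti hcc.2.le
      have h2 : deriv U a * (a - x) ≤ deriv U cc * (a - x) :=
        mul_le_mul_of_nonneg_right h1 hax.le
      have h3 : deriv U a * (x - a) = -(deriv U a * (a - x)) := by ring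
      linarith
    · subst h; simp
    · obtain ⟨cc, hcc, hceq⟩ := exists_deriv_eq_slope U h hUcont.continuousOn
        hUdiff.differentiableOn
      have hax : (0:ℝ) < x - a := by linarith
      rw [eq_div_iff hax.ne'] at hceq
      have h1 : deriv U cc ≤ deriv U a := hanti hcc.1.le
      have h2 : deriv U cc * (x - a) ≤ deriv U a * (x - a) :=
        mul_le_mul_of_nonneg_right h1 hax.le
      linarith
  -- Fenchel inequality
  have bdd : ∀ y : ℝ, 0 < y → BddAbove (Set.range fun x => U x - x * y) := by
    intro y hy
    obtain ⟨a, ha⟩ : ∃ a, deriv U a < y := (hInada2.eventually_lt_const hy).exists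
    obtain ⟨b, hb⟩ : ∃ b, y < deriv U b := (hInada1.eventually_gt_atTop y).exists
    refine ⟨max (U a - deriv U a * a) (U b - deriv U b * b), ?_⟩
    rintro v ⟨x, rfl⟩
    show U x - x * y ≤ max (U a - deriv U a * a) (U b - deriv U b * b)
    rcases le_total 0 x with hx | hx
    · refine le_trans ?_ (le_max_left _ _)
      have hprod : (deriv U a - y) * x ≤ 0 :=
        mul_nonpos_iff.2 (Or.inr ⟨by linarith, hx⟩)
      nlinarith [tangent a x]
    · refine le_trans ?_ (le_max_right _ _)
      have hprod : (deriv U b - y) * x ≤ 0 :=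
        mul_nonpos_iff.2 (Or.inl ⟨by linarith, hx⟩)
      nlinarith [tangent b x]
  have fen : ∀ y : ℝ, 0 < y → ∀ x : ℝ, U x - x * y ≤ V y := by
    intro y hy x
    rw [hV y hy]
    exact le_ciSup (bdd y hy) x
  have hVlb : ∀ y : ℝ, 0 < y → U 0 ≤ V y := by
    intro y hy
    simpa using fen y hy 0
  -- extract a real constant γ from the RAE condition
  obtain ⟨γE, hγ1, hγ2⟩ := exists_between hRAE1
  have h12 : (1 : EReal) < ((2:ℝ) : EReal) := by
    rw [← EReal.coe_one]; exact_mod_cast one_lt_two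
  set γE' : EReal := min γE ((2:ℝ) : EReal) with hγE'
  have hγE'1 : (1 : EReal) < γE' := lt_min hγ1 h12
  have hγE'top : γE' ≠ ⊤ :=
    ((min_le_right _ _).trans_lt (EReal.coe_lt_top 2)).ne
  have hγE'bot : γE' ≠ ⊥ := fun h => by simp [h] at hγE'1
  set γ : ℝ := γE'.toReal with hγdef
  have hγcoe : (γ : EReal) = γE' := EReal.coe_toReal hγE'top hγE'bot
  have hγ1R : (1:ℝ) < γ := by
    have := hγE'1
    rw [← hγcoe] at this
    exact_mod_cast this
  have hγlim : (γ : EReal) < liminf (fun x => ((x * deriv U x / U x : ℝ) : EReal)) atBot := by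
    rw [hγcoe]
    exact lt_of_le_of_lt (min_le_left _ _) hγ2
  have hev : ∀ᶠ x in atBot, (γ : EReal) < ((x * deriv U x / U x : ℝ) : EReal) :=
    eventually_lt_of_lt_liminf hγlim
  obtain ⟨x₁, hx₁⟩ := eventually_atBot.1 hev
  have hx₁' : ∀ x ≤ x₁, γ < x * deriv U x / U x := by
    intro x hx
    exact_mod_cast hx₁ x hx
  -- a point to the left of which U is negative
  obtain ⟨a₁, ha₁⟩ := eventually_atBot.1 (hInada1.eventually_ge_atTop 1)
  set xneg : ℝ := a₁ - |U a₁| - 1 with hxneg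
  set x0 : ℝ := min x₁ (min xneg (-1)) with hx0
  have hx0a : x0 ≤ x₁ := min_le_left _ _
  have hx0b : x0 ≤ xneg := le_trans (min_le_right _ _) (min_le_left _ _)
  have hx0c : x0 ≤ -1 := le_trans (min_le_right _ _) (min_le_right _ _)
  have hUneg0 : ∀ x, x ≤ x0 → U x < 0 := by
    intro x hx
    have hxa : x ≤ a₁ := by
      have := abs_nonneg (U a₁); have := hx.trans hx0b; rw [hxneg] at this; linarith
    have hda : (1:ℝ) ≤ deriv U a₁ := ha₁ a₁ le_rfl
    have hprod : (0:ℝ) ≤ (deriv U a₁ - 1) * (a₁ - x) :=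
      mul_nonneg (by linarith) (by linarith)
    have habs : U a₁ ≤ |U a₁| := le_abs_self _
    have hxx : x ≤ a₁ - |U a₁| - 1 := by
      have := hx.trans hx0b; rwa [hxneg] at this
    nlinarith [tangent a₁ x]
  have hratio : ∀ x, x ≤ x0 → γ < x * deriv U x / U x := fun x hx => hx₁' x (hx.trans hx0a)
  -- the key scaling inequality
  have hFd : ∀ t, t ≤ x0 → HasDerivAt (fun s => Real.log (-U s) - γ * Real.log (-s))
      (deriv U t / U t - γ * (1 / t)) t := by
    intro t ht
    have htneg : t < 0 := by linarith
    have hUt : U t < 0 := hUneg0 t ht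
    have h1 : HasDerivAt (fun s => Real.log (-U s)) (-deriv U t / -U t) t :=
      HasDerivAt.log (hUdiff t).hasDerivAt.neg (by linarith)
    have h2 : HasDerivAt (fun s : ℝ => Real.log (-s)) (-1 / -t) t :=
      HasDerivAt.log (hasDerivAt_id t).neg (by intro h; rw [neg_eq_zero] at h; linarith)
    have h3 := h1.sub (h2.const_mul γ)
    refine h3.congr_deriv ?_
    rw [neg_div_neg_eq, neg_div_neg_eq]
  have hFanti : AntitoneOn (fun s => Real.log (-U s) - γ * Real.log (-s)) (Iic x0) := by
    refine antitoneOn_of_deriv_nonpos (convex_Iic x0)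
      (fun t ht => (hFd t ht).continuousAt.continuousWithinAt) ?_ ?_
    · intro t ht
      rw [interior_Iic] at ht
      exact (hFd t (le_of_lt (mem_Iio.1 ht))).differentiableAt.differentiableWithinAt
    · intro t ht
      rw [interior_Iic] at ht
      have ht' : t ≤ x0 := le_of_lt (mem_Iio.1 ht)
      rw [(hFd t ht').deriv]
      have htneg : t < 0 := by linarith
      have hUt : U t < 0 := hUneg0 t ht'
      have ht0 : t ≠ 0 := htneg.ne
      have hU0 : U t ≠ 0 := hUt.ne
      have h4 : t * deriv U t < γ * U t := (lt_div_iff_of_neg hUt).1 (hratio t ht')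
      have h5 : deriv U t / U t - γ * (1 / t) = (t * deriv U t - γ * U t) / (t * U t) := by
        field_simp
      rw [h5]
      exact div_nonpos_iff.2 (Or.inr ⟨by linarith, (mul_pos_of_neg_of_neg htneg hUt).le⟩)
  have key : ∀ l : ℝ, 1 ≤ l → ∀ x : ℝ, x ≤ x0 → U (l * x) ≤ l ^ γ * U x := by
    intro l hl x hx
    have hxneg' : x < 0 := by linarith
    have hlpos : 0 < l := by linarith
    have hlx : l * x ≤ x := by nlinarith
    have hmem1 : l * x ∈ Iic x0 := mem_Iic.2 (le_trans hlx hx)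
    have h := hFanti hmem1 (mem_Iic.2 hx) hlx
    simp only at h
    have hUx : U x < 0 := hUneg0 x hx
    have hUlx : U (l * x) < 0 := hUneg0 _ hmem1
    have hlog : Real.log (-(l * x)) = Real.log l + Real.log (-x) := by
      rw [show -(l * x) = l * (-x) by ring,
        Real.log_mul (ne_of_gt hlpos) (by linarith : (-x) ≠ 0)]
    rw [hlog] at h
    have h2 : Real.log (-U x) + γ * Real.log l ≤ Real.log (-U (l * x)) := by linarith
    have hrp : 0 < l ^ γ := Real.rpow_pos_of_pos hlpos γ
    have hlhs : Real.log ((-U x) * l ^ γ) = Real.log (-U x) + γ * Real.log l := by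
      rw [Real.log_mul (by linarith : (-U x) ≠ 0) (ne_of_gt hrp), Real.log_rpow hlpos]
    have hexp : (-U x) * l ^ γ ≤ -U (l * x) := by
      rw [← hlhs] at h2
      exact (Real.log_le_log_iff (by nlinarith) (by linarith)).1 h2
    nlinarith
  -- constants
  set lam : ℝ := (2:ℝ) ^ ((1:ℝ) / (γ - 1)) with hlamdef
  have hlam1 : 1 ≤ lam := by
    have h0 : (2:ℝ) ^ (0:ℝ) ≤ (2:ℝ) ^ ((1:ℝ) / (γ - 1)) := by
      rw [Real.rpow_le_rpow_left_iff one_lt_two]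
      exact div_nonneg zero_le_one (by linarith)
    rwa [Real.rpow_zero] at h0
  have hlampos : (0:ℝ) < lam := by linarith
  set K : ℝ := lam ^ γ with hKdef
  have hγne : γ - 1 ≠ 0 := by linarith
  have hKeq : K = 2 * lam := by
    have h1 : lam ^ γ = (2:ℝ) ^ (((1:ℝ) / (γ - 1)) * γ) := by
      rw [hlamdef, ← Real.rpow_mul (by norm_num : (0:ℝ) ≤ 2)]
    have h2 : ((1:ℝ) / (γ - 1)) * γ = 1 + (1:ℝ) / (γ - 1) := by
      field_simp
      ring
    rw [hKdef, h1, h2, Real.rpow_add (by norm_num : (0:ℝ) < 2), Real.rpow_one, hlamdef]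
  have hKpos : 0 < K := Real.rpow_pos_of_pos hlampos γ
  have hK1 : 1 ≤ K := by nlinarith
  -- Lemma A : scaling of V
  have lemA : ∀ y : ℝ, 0 < y → V (2 * y) ≤ K * (V y + |U 0|) + lam * (-x0) * y := by
    intro y hy
    have h2y : 0 < 2 * y := by linarith
    rw [hV _ h2y]
    apply ciSup_le
    intro x
    have hx0neg : x0 < 0 := by linarith
    rcases le_or_gt x (lam * x0) with hcase | hcase
    · have hx' : x / lam ≤ x0 := by
        rw [div_le_iff₀ hlampos]
        nlinarith
      have hk := key lam hlam1 (x / lam) hx'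
      rw [show lam * (x / lam) = x by field_simp] at hk
      have hfen := fen y hy (x / lam)
      have hxx : x * (2 * y) = K * ((x / lam) * y) := by
        rw [hKeq]; field_simp
      have hstep : U x - x * (2 * y) ≤ K * (V y) := by
        calc U x - x * (2 * y) ≤ K * U (x / lam) - K * ((x / lam) * y) := by
              rw [hxx]; linarith
          _ = K * (U (x / lam) - (x / lam) * y) := by ring
          _ ≤ K * V y := mul_le_mul_of_nonneg_left hfen hKpos.le
      have habs : 0 ≤ |U 0| := abs_nonneg _
      have h8 : 0 ≤ K * |U 0| := mul_nonneg hKpos.le habs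
      have h9 : 0 ≤ lam * (-x0) * y :=
        mul_nonneg (mul_nonneg hlampos.le (by linarith)) hy.le
      have h10 : K * (V y + |U 0|) = K * V y + K * |U 0| := by ring
      linarith
    · have hfen := fen y hy x
      have h5 : -x ≤ lam * (-x0) := by
        have : lam * (-x0) = -(lam * x0) := by ring
        linarith
      have h6 : 0 ≤ V y + |U 0| := by
        have := hVlb y hy
        have := neg_abs_le (U 0)
        linarith
      have h7 : V y ≤ K * (V y + |U 0|) := by
        have := le_mul_of_one_le_left h6 hK1
        have := abs_nonneg (U 0)
        linarith
      have h8 : (-x) * y ≤ lam * (-x0) * y := mul_le_mul_of_nonneg_right h5 hy.le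
      have h9 : U x - x * (2 * y) = (U x - x * y) + (-x) * y := by ring
      linarith
  -- measure-theoretic setup
  set Z : Ω → ℝ := fun ω => (Q.rnDeriv P ω).toReal with hZdef
  have hZnonneg : ∀ ω, 0 ≤ Z ω := fun ω => ENNReal.toReal_nonneg
  have hZint : Integrable Z P := Measure.integrable_toReal_rnDeriv
  have hVZint : Integrable (fun ω => V (Z ω)) P := hent
  have hx0neg : x0 < 0 := by linarith
  -- a.e. dichotomy for Z
  have hZcase : ∀ᵐ ω ∂P, 0 < Z ω ∨ (BddAbove (Set.range U) ∧ Z ω = 0) := by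
    by_cases hb : BddAbove (Set.range U)
    · filter_upwards [Measure.rnDeriv_lt_top Q P] with ω hω
      rcases (hZnonneg ω).eq_or_lt with h | h
      · exact Or.inr ⟨hb, h.symm⟩
      · exact Or.inl h
    · filter_upwards [hpos hb, Measure.rnDeriv_lt_top Q P] with ω h1 h2
      exact Or.inl (ENNReal.toReal_pos h1.ne' h2.ne)
  -- pointwise inequality I1
  have I1 : ∀ᵐ ω ∂P, ∀ r : ℝ, max (U r) 0 ≤ |V (Z ω)| + max r 0 * Z ω := by
    filter_upwards [hZcase] with ω hω r
    have hrhs : 0 ≤ |V (Z ω)| + max r 0 * Z ω := by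
      have := abs_nonneg (V (Z ω))
      have := mul_nonneg (le_max_right r 0) (hZnonneg ω)
      linarith
    rcases hω with hp | ⟨hb, hz⟩
    · have h1 := fen (Z ω) hp r
      have h2 : r * Z ω ≤ max r 0 * Z ω :=
        mul_le_mul_of_nonneg_right (le_max_left r 0) (hZnonneg ω)
      have h3 : U r ≤ |V (Z ω)| + max r 0 * Z ω := by
        have := le_abs_self (V (Z ω)); linarith
      exact max_le h3 hrhs
    · have hS : U r ≤ sSup (Set.range U) := le_csSup hb ⟨r, rfl⟩
      have h4 : U r ≤ |V (Z ω)| := by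
        rw [hz, hV0 hb]
        exact hS.trans (le_abs_self _)
      refine max_le ?_ hrhs
      have := mul_nonneg (le_max_right r 0) (hZnonneg ω)
      linarith
  -- pointwise inequality I2
  have I2 : ∀ᵐ ω ∂P, ∀ r : ℝ, 2 * (max (-r) 0 * Z ω) ≤
      (K * |V (Z ω)| + K * |U 0| + lam * (-x0) * Z ω) + max (-(U r)) 0 := by
    filter_upwards [hZcase] with ω hω r
    have hGnn : 0 ≤ K * |V (Z ω)| + K * |U 0| + lam * (-x0) * Z ω := by
      have h1 := mul_nonneg hKpos.le (abs_nonneg (V (Z ω)))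
      have h2 := mul_nonneg hKpos.le (abs_nonneg (U 0))
      have h3 : 0 ≤ lam * (-x0) * Z ω :=
        mul_nonneg (mul_nonneg hlampos.le (by linarith)) (hZnonneg ω)
      linarith
    have hUmax : 0 ≤ max (-(U r)) 0 := le_max_right _ _
    rcases hω with hp | ⟨hb, hz⟩
    · rcases le_or_gt 0 r with hr | hr
      · rw [max_eq_right (by linarith : -r ≤ 0)]
        simp only [zero_mul, mul_zero]
        linarith
      · rw [max_eq_left (by linarith : (0:ℝ) ≤ -r)]
        have h2Z : 0 < 2 * Z ω := by linarith [hp]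
        have hfen := fen (2 * Z ω) h2Z r
        have hA := lemA (Z ω) hp
        have habs : K * V (Z ω) ≤ K * |V (Z ω)| :=
          mul_le_mul_of_nonneg_left (le_abs_self _) hKpos.le
        have habs2 : K * |U 0| = K * |U 0| := rfl
        have hU2 : -(U r) ≤ max (-(U r)) 0 := le_max_left _ _
        have he : 2 * (-r * Z ω) = -(r * (2 * Z ω)) := by ring
        have he2 : K * (V (Z ω) + |U 0|) = K * V (Z ω) + K * |U 0| := by ring
        linarith
    · have h0 : max (-r) 0 * Z ω = 0 := by rw [hz, mul_zero]
      linarith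
  -- constants for the final bounds
  set A0 : ℝ := ∫ ω, |V (Z ω)| ∂P with hA0def
  set G : Ω → ℝ := fun ω => K * |V (Z ω)| + K * |U 0| + lam * (-x0) * Z ω with hGdef
  have hGint : Integrable G P :=
    (((hVZint.abs.const_mul K).add (integrable_const _)).add (hZint.const_mul _))
  set MG : ℝ := ∫ ω, G ω ∂P with hMGdef
  set cp : ℝ := max c 0 with hcpdef
  set B : ℝ := 2 * (A0 + cp) + MG with hBdef
  -- main per-n estimates
  have main : ∀ n, Integrable (fun ω => U (k n ω)) P ∧
      (∫ ω, |k n ω| ∂Q ≤ MG + B) ∧ (∫ ω, |U (k n ω)| ∂P ≤ A0 + (MG + B) / 2 + B) := by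
    intro n
    have hfQ := hkQ n
    have hfposQ : Integrable (fun ω => max (k n ω) 0) Q := hfQ.pos_part
    have hfnegQ : Integrable (fun ω => max (-(k n ω)) 0) Q := hfQ.neg_part
    have hZfpos : Integrable (fun ω => max (k n ω) 0 * Z ω) P := by
      have := (integrable_rnDeriv_smul_iff hQP).2 hfposQ
      simpa [smul_eq_mul, mul_comm] using this
    have hZfneg : Integrable (fun ω => max (-(k n ω)) 0 * Z ω) P := by
      have := (integrable_rnDeriv_smul_iff hQP).2 hfnegQ
      simpa [smul_eq_mul, mul_comm] using this
    have hintpos : ∫ ω, max (k n ω) 0 * Z ω ∂P = ∫ ω, max (k n ω) 0 ∂Q := by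
      rw [← integral_rnDeriv_smul hQP (f := fun ω => max (k n ω) 0)]
      congr 1
      ext ω
      simp [smul_eq_mul, mul_comm, hZdef]
    have hintneg : ∫ ω, max (-(k n ω)) 0 * Z ω ∂P = ∫ ω, max (-(k n ω)) 0 ∂Q := by
      rw [← integral_rnDeriv_smul hQP (f := fun ω => max (-(k n ω)) 0)]
      congr 1
      ext ω
      simp [smul_eq_mul, mul_comm, hZdef]
    -- integrability of the positive part of U ∘ k n
    have hUfm : Measurable (fun ω => U (k n ω)) := hUcont.measurable.comp (hkmeas n)
    have hUfpos_int : Integrable (fun ω => max (U (k n ω)) 0) P := by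
      refine Integrable.mono' (hVZint.abs.add hZfpos)
        ((hUfm.max measurable_const).aestronglyMeasurable) ?_
      filter_upwards [I1] with ω hω
      rw [Real.norm_eq_abs, abs_of_nonneg (le_max_right _ _)]
      exact hω (k n ω)
    have hUf_int : Integrable (fun ω => U (k n ω)) P := by
      have := hUfpos_int.sub (hUneg n)
      simpa only [Pi.sub_def, max_zero_sub_max_neg_zero_eq_self] using this
    -- notation for the four integrals
    set p : ℝ := ∫ ω, max (U (k n ω)) 0 ∂P with hpdef
    set b : ℝ := ∫ ω, max (-(U (k n ω))) 0 ∂P with hbdef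
    set qp : ℝ := ∫ ω, max (k n ω) 0 ∂Q with hqpdef
    set qm : ℝ := ∫ ω, max (-(k n ω)) 0 ∂Q with hqmdef
    have hp0 : 0 ≤ p := integral_nonneg fun ω => le_max_right _ _
    have hb0 : 0 ≤ b := integral_nonneg fun ω => le_max_right _ _
    have hqm0 : 0 ≤ qm := integral_nonneg fun ω => le_max_right _ _
    -- (3) p ≤ A0 + qp
    have h3 : p ≤ A0 + qp := by
      have hmono := integral_mono_ae hUfpos_int (hVZint.abs.add hZfpos)
        (by filter_upwards [I1] with ω hω; exact hω (k n ω))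
      simp only [Pi.add_apply] at hmono
      rwa [integral_add hVZint.abs hZfpos, hintpos] at hmono
    -- (4) 2*qm ≤ MG + b
    have h4 : 2 * qm ≤ MG + b := by
      have hle := integral_mono_ae (hZfneg.const_mul 2) (hGint.add (hUneg n))
        (by filter_upwards [I2] with ω hω; exact hω (k n ω))
      simp only [Pi.add_apply] at hle
      rw [integral_const_mul, hintneg, integral_add hGint (hUneg n)] at hle
      exact hle
    -- (5) b ≤ p + cp
    have h5 : b ≤ p + cp := by
      have e1 : ∫⁻ ω, ENNReal.ofReal (-(U (k n ω))) ∂P = ENNReal.ofReal b := by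
        rw [show (fun ω => ENNReal.ofReal (-(U (k n ω)))) =
            fun ω => ENNReal.ofReal (max (-(U (k n ω))) 0) from
          funext fun ω => ofReal_max_zero _]
        rw [← ofReal_integral_eq_lintegral_ofReal (hUneg n)
          (Filter.Eventually.of_forall fun ω => le_max_right _ _)]
      have e2 : ∫⁻ ω, ENNReal.ofReal (U (k n ω)) ∂P = ENNReal.ofReal p := by
        rw [show (fun ω => ENNReal.ofReal (U (k n ω))) =
            fun ω => ENNReal.ofReal (max (U (k n ω)) 0) from
          funext fun ω => ofReal_max_zero _]
        rw [← ofReal_integral_eq_lintegral_ofReal hUfpos_int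
          (Filter.Eventually.of_forall fun ω => le_max_right _ _)]
      have := hc n
      rw [e1, e2] at this
      have h6 : ENNReal.ofReal b ≤ ENNReal.ofReal (p + cp) := by
        calc ENNReal.ofReal b ≤ ENNReal.ofReal p + ENNReal.ofReal c := this
          _ ≤ ENNReal.ofReal p + ENNReal.ofReal cp :=
              add_le_add le_rfl (ENNReal.ofReal_le_ofReal (le_max_left _ _))
          _ = ENNReal.ofReal (p + cp) :=
              (ENNReal.ofReal_add hp0 (le_max_right _ _)).symm
      exact (ENNReal.ofReal_le_ofReal_iff (by positivity)).1 h6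
    -- (6) sign relation : qp ≤ qm
    have hsplit : ∫ ω, k n ω ∂Q = qp - qm := by
      rw [hqpdef, hqmdef, ← integral_sub hfposQ hfnegQ]
      congr 1
      ext ω
      exact (max_zero_sub_max_neg_zero_eq_self _).symm
    have hqpm : qp ≤ qm := by
      have := hkmean n
      rw [hsplit] at this
      linarith
    -- combine
    have hbB : b ≤ B := by
      rw [hBdef]
      linarith
    have hqmB : qm ≤ (MG + B) / 2 := by linarith
    have habsQ : ∫ ω, |k n ω| ∂Q = qp + qm := by
      rw [hqpdef, hqmdef, ← integral_add hfposQ hfnegQ]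
      congr 1
      ext ω
      exact (max_zero_add_max_neg_zero_eq_abs_self _).symm
    have habsP : ∫ ω, |U (k n ω)| ∂P = p + b := by
      rw [hpdef, hbdef, ← integral_add hUfpos_int (hUneg n)]
      congr 1
      ext ω
      exact (max_zero_add_max_neg_zero_eq_abs_self _).symm
    refine ⟨hUf_int, ?_, ?_⟩
    · rw [habsQ]; linarith
    · rw [habsP]; linarith
  exact ⟨⟨MG + B, fun n => (main n).2.1⟩, fun n => (main n).1,
    ⟨A0 + (MG + B) / 2 + B, fun n => (main n).2.2⟩⟩
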